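/- Let R be an ADE root lattice and α, β distinct positive roots of R. In R ⊗ E₈, if ⟨α,β⟩ = 0 then M_α + M_β is isometric to the orthogonal direct sum √2E₈ ⊥ √2E₈, and if ⟨α,β⟩ = ±1 then M_α + M_β is isometric to A₂ ⊗ E₈. -/

import Mathlib

open TensorProduct Matrix

/-- The Cartan matrix of `E₈` (Bourbaki numbering). -/
def cartanE8 : Matrix (Fin 8) (Fin 8) ℤ :=
  !![2, 0, -1, 0, 0, 0, 0, 0;
     0, 2, 0, -1, 0, 0, 0, 0;
     -1, 0, 2, -1, 0, 0, 0, 0;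
     0, -1, -1, 2, -1, 0, 0, 0;
     0, 0, 0, -1, 2, -1, 0, 0;
     0, 0, 0, 0, -1, 2, -1, 0;
     0, 0, 0, 0, 0, -1, 2, -1;
     0, 0, 0, 0, 0, 0, -1, 2]

/-- The `E₈` bilinear form on `ℤ⁸`. -/
noncomputable def bE8 : LinearMap.BilinForm ℤ (Fin 8 → ℤ) :=
  Matrix.toLinearMap₂' ℤ cartanE8

/-- The Cartan matrix of `A₂`, the Gram matrix of the `A₂` root lattice. -/
def cartanA2 : Matrix (Fin 2) (Fin 2) ℤ := !![2, -1; -1, 2]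

/-- The `A₂` bilinear form on `ℤ²`. -/
noncomputable def bA2 : LinearMap.BilinForm ℤ (Fin 2 → ℤ) :=
  Matrix.toLinearMap₂' ℤ cartanA2

def cartanE8inv : Matrix (Fin 8) (Fin 8) ℤ :=
  !![4, 5, 7, 10, 8, 6, 4, 2;
     5, 8, 10, 15, 12, 9, 6, 3;
     7, 10, 14, 20, 16, 12, 8, 4;
     10, 15, 20, 30, 24, 18, 12, 6;
     8, 12, 16, 24, 20, 15, 10, 5;
     6, 9, 12, 18, 15, 12, 8, 4;
     4, 6, 8, 12, 10, 8, 6, 3;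
     2, 3, 4, 6, 5, 4, 3, 2]

lemma cartanE8inv_mul : cartanE8inv * cartanE8 = 1 := by decide

lemma bE8_left_nondegen (u : Fin 8 → ℤ) (h : ∀ w, bE8 w u = 0) : u = 0 := by
  have hmv : cartanE8 *ᵥ u = 0 := by
    funext j
    have := h (Pi.single j 1)
    rw [bE8, Matrix.toLinearMap₂'_apply'] at this
    simpa [dotProduct, Pi.single_apply] using this
  have : cartanE8inv *ᵥ (cartanE8 *ᵥ u) = u := by
    rw [Matrix.mulVec_mulVec, cartanE8inv_mul, Matrix.one_mulVec]
  rw [hmv, Matrix.mulVec_zero] at this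
  exact this.symm


attribute [-instance] instMulActionIntOfSubtractionMonoid in
lemma key_inj {R : Type*} [AddCommGroup R] [Module ℤ R]
    (bR : LinearMap.BilinForm ℤ R) (a b : R) (c : ℤ)
    (haa : bR a a = 2) (hbb : bR b b = 2) (hab : bR a b = c) (hba : bR b a = c)
    (hc : 4 - c * c ≠ 0) (u v : Fin 8 → ℤ)
    (h : a ⊗ₜ[ℤ] u + b ⊗ₜ[ℤ] v = (0 : R ⊗[ℤ] (Fin 8 → ℤ))) : u = 0 ∧ v = 0 := by
  have key : ∀ w : Fin 8 → ℤ, 2 * bE8 w u + c * bE8 w v = 0 ∧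
      c * bE8 w u + 2 * bE8 w v = 0 := by
    intro w
    have h1 : (LinearMap.BilinForm.tmul bR bE8) (a ⊗ₜ[ℤ] w) (a ⊗ₜ[ℤ] u + b ⊗ₜ[ℤ] v) = 0 := by
      rw [h, map_zero]
    have h2 : (LinearMap.BilinForm.tmul bR bE8) (b ⊗ₜ[ℤ] w) (a ⊗ₜ[ℤ] u + b ⊗ₜ[ℤ] v) = 0 := by
      rw [h, map_zero]
    rw [map_add] at h1 h2
    simp only [LinearMap.BilinForm.tensorDistrib_tmul, haa, hbb, hab, hba,
      smul_eq_mul] at h1 h2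
    constructor <;> linarith
  have hu : u = 0 := by
    apply bE8_left_nondegen
    intro w
    obtain ⟨k1, k2⟩ := key w
    have : (4 - c * c) * bE8 w u = 0 := by linear_combination 2 * k1 - c * k2
    exact (mul_eq_zero.mp this).resolve_left hc
  have hv : v = 0 := by
    apply bE8_left_nondegen
    intro w
    obtain ⟨k1, k2⟩ := key w
    have : (4 - c * c) * bE8 w v = 0 := by linear_combination 2 * k2 - c * k1
    exact (mul_eq_zero.mp this).resolve_left hc
  exact ⟨hu, hv⟩

lemma fin2_decomp (c : Fin 2 → ℤ) :
    c = c 0 • Pi.single (0 : Fin 2) (1 : ℤ) + c 1 • Pi.single 1 1 := by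
  funext j
  fin_cases j <;> simp

lemma tensor_decomp (t : (Fin 2 → ℤ) ⊗[ℤ] (Fin 8 → ℤ)) :
    ∃ u v : Fin 8 → ℤ,
      t = (Pi.single (0 : Fin 2) (1 : ℤ)) ⊗ₜ[ℤ] u + (Pi.single 1 1) ⊗ₜ[ℤ] v := by
  induction t with
  | zero => exact ⟨0, 0, by simp⟩
  | tmul c x =>
    refine ⟨c 0 • x, c 1 • x, ?_⟩
    conv_lhs => rw [fin2_decomp c]
    rw [add_tmul, smul_tmul, smul_tmul]
  | add t₁ t₂ h₁ h₂ =>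
    obtain ⟨u₁, v₁, rfl⟩ := h₁
    obtain ⟨u₂, v₂, rfl⟩ := h₂
    exact ⟨u₁ + u₂, v₁ + v₂, by rw [tmul_add, tmul_add]; abel⟩

attribute [-instance] instMulActionIntOfSubtractionMonoid in
/-- **The lattice `M_α + M_β`.** Let `R` be an ADE root lattice and `α ≠ β` roots of
`R` (so `⟨α,β⟩ ∈ {0,±1}`). Inside the tensor product lattice `R ⊗ E₈`, with
`M_γ = ℤγ ⊗ E₈`: if `⟨α,β⟩ = 0` then `M_α + M_β ≅ √2E₈ ⊥ √2E₈`, and if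
`⟨α,β⟩ = ±1` then `M_α + M_β ≅ A₂ ⊗ E₈`. -/
theorem Malpha_plus_Mbeta
    {R : Type*} [AddCommGroup R] [Module ℤ R]
    (bR : LinearMap.BilinForm ℤ R) (hsym : ∀ x y, bR x y = bR y x)
    (α β : R) (hα : bR α α = 2) (hβ : bR β β = 2) (hne : α ≠ β) :
    (bR α β = 0 →
      ∃ f : ((Fin 8 → ℤ) × (Fin 8 → ℤ)) ≃ₗ[ℤ]
          ↥(Submodule.span ℤ (Set.range fun γ : Fin 8 → ℤ => α ⊗ₜ[ℤ] γ) ⊔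
            Submodule.span ℤ (Set.range fun γ : Fin 8 → ℤ => β ⊗ₜ[ℤ] γ)),
        ∀ u v, (LinearMap.BilinForm.tmul bR bE8) (f u).1 (f v).1
          = 2 * bE8 u.1 v.1 + 2 * bE8 u.2 v.2) ∧
    ((bR α β = 1 ∨ bR α β = -1) →
      ∃ f : ((Fin 2 → ℤ) ⊗[ℤ] (Fin 8 → ℤ)) ≃ₗ[ℤ]
          ↥(Submodule.span ℤ (Set.range fun γ : Fin 8 → ℤ => α ⊗ₜ[ℤ] γ) ⊔
            Submodule.span ℤ (Set.range fun γ : Fin 8 → ℤ => β ⊗ₜ[ℤ] γ)),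
        ∀ u v, (LinearMap.BilinForm.tmul bR bE8) (f u).1 (f v).1
          = (LinearMap.BilinForm.tmul bA2 bE8) u v) := by
  constructor
  · intro h0
    set S := Submodule.span ℤ (Set.range fun γ : Fin 8 → ℤ => α ⊗ₜ[ℤ] γ) ⊔
            Submodule.span ℤ (Set.range fun γ : Fin 8 → ℤ => β ⊗ₜ[ℤ] γ) with hS
    set g : ((Fin 8 → ℤ) × (Fin 8 → ℤ)) →ₗ[ℤ] R ⊗[ℤ] (Fin 8 → ℤ) :=
      ((TensorProduct.mk ℤ R (Fin 8 → ℤ)) α).comp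
        (LinearMap.fst ℤ (Fin 8 → ℤ) (Fin 8 → ℤ)) +
      ((TensorProduct.mk ℤ R (Fin 8 → ℤ)) β).comp
        (LinearMap.snd ℤ (Fin 8 → ℤ) (Fin 8 → ℤ)) with hg
    have hgapp : ∀ p : (Fin 8 → ℤ) × (Fin 8 → ℤ), g p = α ⊗ₜ[ℤ] p.1 + β ⊗ₜ[ℤ] p.2 :=
      fun p => rfl
    have hβα : bR β α = 0 := by rw [hsym]; exact h0
    have hinj : Function.Injective g := by
      rw [injective_iff_map_eq_zero]
      intro p hp
      rw [hgapp] at hp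
      obtain ⟨h1, h2⟩ := key_inj bR α β 0 hα hβ h0 hβα (by norm_num) p.1 p.2 hp
      exact Prod.ext h1 h2
    have hrange : LinearMap.range g = S := by
      apply le_antisymm
      · rintro x ⟨p, rfl⟩
        rw [hgapp]
        exact Submodule.add_mem _
          (Submodule.mem_sup_left (Submodule.subset_span ⟨p.1, rfl⟩))
          (Submodule.mem_sup_right (Submodule.subset_span ⟨p.2, rfl⟩))
      · apply sup_le <;> rw [Submodule.span_le] <;> rintro x ⟨γ, rfl⟩
        · exact ⟨(γ, 0), by simp [hgapp]⟩
        · exact ⟨(0, γ), by simp [hgapp]⟩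
    refine ⟨(LinearEquiv.ofInjective g hinj).trans (LinearEquiv.ofEq _ _ hrange), ?_⟩
    intro u v
    have hcoe : ∀ p, ((((LinearEquiv.ofInjective g hinj).trans
        (LinearEquiv.ofEq _ _ hrange)) p : S) : R ⊗[ℤ] (Fin 8 → ℤ)) = g p := fun p => rfl
    rw [hcoe, hcoe, hgapp, hgapp]
    simp only [map_add, LinearMap.add_apply,
      LinearMap.BilinForm.tensorDistrib_tmul, hα, hβ, h0, hβα, smul_eq_mul]
    ring
  · intro h1
    set S := Submodule.span ℤ (Set.range fun γ : Fin 8 → ℤ => α ⊗ₜ[ℤ] γ) ⊔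
            Submodule.span ℤ (Set.range fun γ : Fin 8 → ℤ => β ⊗ₜ[ℤ] γ) with hS
    obtain ⟨β', hαβ', hβ'α, hβ'β', hsp1, hsp2⟩ :
        ∃ β' : R, bR α β' = -1 ∧ bR β' α = -1 ∧ bR β' β' = 2 ∧
          (∀ x : Fin 8 → ℤ, ∃ y, β' ⊗ₜ[ℤ] x = β ⊗ₜ[ℤ] y) ∧
          (∀ x : Fin 8 → ℤ, ∃ y, β ⊗ₜ[ℤ] x = β' ⊗ₜ[ℤ] y) := by
      rcases h1 with h | h
      · refine ⟨-β, ?_, ?_, ?_, fun x => ⟨-x, ?_⟩, fun x => ⟨-x, ?_⟩⟩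
        · rw [map_neg, h]
        · rw [map_neg, LinearMap.neg_apply, hsym β α, h]
        · rw [map_neg, map_neg, LinearMap.neg_apply, neg_neg, hβ]
        · rw [neg_tmul, tmul_neg]
        · rw [neg_tmul, tmul_neg, neg_neg]
      · exact ⟨β, h, by rw [hsym β α]; exact h, hβ, fun x => ⟨x, rfl⟩, fun x => ⟨x, rfl⟩⟩
    set φ : (Fin 2 → ℤ) →ₗ[ℤ] R :=
      ((LinearMap.proj (0 : Fin 2) : (Fin 2 → ℤ) →ₗ[ℤ] ℤ).smulRight α) +
      ((LinearMap.proj (1 : Fin 2) : (Fin 2 → ℤ) →ₗ[ℤ] ℤ).smulRight β') with hφ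
    have hφ0 : φ (Pi.single 0 1) = α := by
      rw [hφ]
      simp only [LinearMap.add_apply, LinearMap.smulRight_apply, LinearMap.proj_apply]
      rw [Pi.single_eq_same, Pi.single_eq_of_ne (by decide)]
      module
    have hφ1 : φ (Pi.single 1 1) = β' := by
      rw [hφ]
      simp only [LinearMap.add_apply, LinearMap.smulRight_apply, LinearMap.proj_apply]
      rw [Pi.single_eq_same, Pi.single_eq_of_ne (by decide)]
      module
    set g : ((Fin 2 → ℤ) ⊗[ℤ] (Fin 8 → ℤ)) →ₗ[ℤ] R ⊗[ℤ] (Fin 8 → ℤ) :=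
      (AddMonoidHom.mk' (fun t => TensorProduct.map φ
        (LinearMap.id : (Fin 8 → ℤ) →ₗ[ℤ] (Fin 8 → ℤ)) t)
        (fun a b => map_add _ a b)).toIntLinearMap with hg
    have hgtmul : ∀ (c : Fin 2 → ℤ) (x : Fin 8 → ℤ), g (c ⊗ₜ[ℤ] x) = φ c ⊗ₜ[ℤ] x := by
      intro c x
      rw [hg]
      show (TensorProduct.map φ (LinearMap.id : (Fin 8 → ℤ) →ₗ[ℤ] (Fin 8 → ℤ))) (c ⊗ₜ[ℤ] x)
        = φ c ⊗ₜ[ℤ] x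
      rw [TensorProduct.map_tmul, LinearMap.id_apply]
    have hinj : Function.Injective g := by
      rw [injective_iff_map_eq_zero]
      intro t ht
      obtain ⟨u, v, rfl⟩ := tensor_decomp t
      rw [map_add, hgtmul, hgtmul, hφ0, hφ1] at ht
      obtain ⟨h1', h2'⟩ := key_inj bR α β' (-1) hα hβ'β' hαβ' hβ'α (by norm_num) u v ht
      rw [h1', h2']
      simp
    have hrange : LinearMap.range g = S := by
      apply le_antisymm
      · rintro x ⟨t, rfl⟩
        obtain ⟨u, v, rfl⟩ := tensor_decomp t
        rw [map_add, hgtmul, hgtmul, hφ0, hφ1]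
        obtain ⟨y, hy⟩ := hsp1 v
        rw [hy]
        exact Submodule.add_mem _
          (Submodule.mem_sup_left (Submodule.subset_span ⟨u, rfl⟩))
          (Submodule.mem_sup_right (Submodule.subset_span ⟨y, rfl⟩))
      · apply sup_le <;> rw [Submodule.span_le] <;> rintro x ⟨γ, rfl⟩
        · exact ⟨(Pi.single 0 1) ⊗ₜ[ℤ] γ, by rw [hgtmul, hφ0]⟩
        · obtain ⟨y, hy⟩ := hsp2 γ
          exact ⟨(Pi.single 1 1) ⊗ₜ[ℤ] y, by rw [hgtmul, hφ1, ← hy]⟩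
    have hgram : ∀ c d : Fin 2 → ℤ, bR (φ c) (φ d) = bA2 c d := by
      intro c d
      rw [hφ]
      simp only [LinearMap.add_apply, LinearMap.smulRight_apply, LinearMap.proj_apply,
        map_add, LinearMap.map_smul, LinearMap.smul_apply, smul_eq_mul]
      rw [hα, hαβ', hβ'α, hβ'β', bA2, Matrix.toLinearMap₂'_apply]
      simp only [Fin.sum_univ_succ, Fin.sum_univ_zero, smul_eq_mul, cartanA2]
      norm_num [Matrix.cons_val_zero, Matrix.cons_val_one]
      ring
    refine ⟨(LinearEquiv.ofInjective g hinj).trans (LinearEquiv.ofEq _ _ hrange), ?_⟩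
    intro u v
    have hcoe : ∀ t, ((((LinearEquiv.ofInjective g hinj).trans
        (LinearEquiv.ofEq _ _ hrange)) t : S) : R ⊗[ℤ] (Fin 8 → ℤ)) = g t := fun t => rfl
    rw [hcoe, hcoe]
    induction u with
    | zero => simp
    | tmul c x =>
      induction v with
      | zero => simp
      | tmul d y =>
        rw [hgtmul, hgtmul]
        rw [LinearMap.BilinForm.tensorDistrib_tmul, LinearMap.BilinForm.tensorDistrib_tmul]
        rw [hgram]
      | add v₁ v₂ h₁ h₂ =>
        simp only [map_add, h₁, h₂]
    | add u₁ u₂ h₁ h₂ =>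
      simp only [map_add, LinearMap.add_apply, h₁, h₂]
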